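/- Suppose (u,v) ↦ (p−q, p+q) where p, q are nonnegative integers with p + q ≤ n and (p−q)² − (p+q)(n+1) + 2(n+1) = 0. Writing n+1 = a²b with b squarefree, any solution has u = p−q divisible by ab. The complete list of solutions with p > q is: p = q = 1 (any n); (p,q,n) = (3,0,8); (6,0,8); (4,0,7). -/

import Mathlib

theorem An_extension_diophantine (p q n : ℕ) (hq : q ≤ p) (hpq : p + q ≤ n)
    (heq : ((p : ℤ) - q) ^ 2 - ((p : ℤ) + q) * (n + 1) + 2 * (n + 1) = 0) :
    (∀ a b : ℕ, n + 1 = a ^ 2 * b → Squarefree b → ((a : ℤ) * b) ∣ ((p : ℤ) - q)) ∧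
      ((p = 1 ∧ q = 1) ∨ (p = 3 ∧ q = 0 ∧ n = 8) ∨ (p = 6 ∧ q = 0 ∧ n = 8) ∨
        (p = 4 ∧ q = 0 ∧ n = 7)) := by
  have hqn : (q : ℤ) ≤ p := by exact_mod_cast hq
  have hn : (p : ℤ) + q ≤ n := by exact_mod_cast hpq
  have hu : ((p : ℤ) - q) ^ 2 = ((p : ℤ) + q - 2) * (n + 1) := by nlinarith [heq]
  have hcase : (p = 1 ∧ q = 1) ∨ (p = 3 ∧ q = 0 ∧ n = 8) ∨ (p = 6 ∧ q = 0 ∧ n = 8) ∨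
      (p = 4 ∧ q = 0 ∧ n = 7) := by
    have hnn : (0 : ℤ) ≤ n := Int.natCast_nonneg n
    have hs2 : 2 ≤ p + q := by
      by_contra h
      push_neg at h
      have hp1 : p ≤ 1 := by omega
      have hq1 : q ≤ 1 := by omega
      interval_cases p <;> interval_cases q <;> norm_num at hu <;> nlinarith
    have hq0 : q = 0 ∨ (p = 1 ∧ q = 1) := by
      rcases Nat.eq_zero_or_pos q with h | h
      · exact Or.inl h
      · right
        have hq1 : (1 : ℤ) ≤ q := by exact_mod_cast h
        by_cases h3 : p + q = 2
        · constructor <;> omega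
        · exfalso
          have h3' : (3 : ℤ) ≤ (p : ℤ) + q := by
            have : 3 ≤ p + q := by omega
            exact_mod_cast this
          nlinarith
    rcases hq0 with h | h
    · subst h
      simp only [Nat.cast_zero, sub_zero, add_zero] at hu hn
      have hp3 : 3 ≤ p := by
        by_contra hc
        push_neg at hc
        interval_cases p <;> simp_all
      have hp3' : (3 : ℤ) ≤ p := by exact_mod_cast hp3
      have hdvd : ((p : ℤ) - 2) ∣ 4 := by
        have h1 : ((p : ℤ) - 2) ∣ (p : ℤ) ^ 2 := ⟨(n : ℤ) + 1, hu⟩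
        have h2 : (4 : ℤ) = (p : ℤ) ^ 2 - ((p : ℤ) - 2) * (p + 2) := by ring
        rw [h2]
        exact dvd_sub h1 (Dvd.intro _ rfl)
      have hple : (p : ℤ) - 2 ≤ 4 := Int.le_of_dvd (by norm_num) hdvd
      have hp6 : p ≤ 6 := by
        have : (p : ℤ) ≤ 6 := by linarith
        exact_mod_cast this
      interval_cases p <;> norm_num at hu ⊢ <;> omega
    · exact Or.inl h
  refine ⟨?_, hcase⟩
  intro a b hab hsf
  have hb0 : b ≠ 0 := by
    rintro rfl
    simp at hab
  rcases hcase with ⟨hp, hq'⟩ | ⟨hp, hq', hn'⟩ | ⟨hp, hq', hn'⟩ | ⟨hp, hq', hn'⟩ <;>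
      subst hp <;> subst hq'
  · simp
  all_goals subst hn'
  · -- n = 8 : 9 = a^2 * b
    norm_num at hab ⊢
    have ha3 : a ≤ 3 := by nlinarith [Nat.one_le_iff_ne_zero.mpr hb0]
    interval_cases a
    · omega
    · have : b = 9 := by omega
      subst this
      have := hsf 3 (by norm_num)
      simp [Nat.isUnit_iff] at this
    · omega
    · have : b = 1 := by nlinarith
      subst this
      norm_num
  · norm_num at hab ⊢
    have ha3 : a ≤ 3 := by nlinarith [Nat.one_le_iff_ne_zero.mpr hb0]
    interval_cases a
    · omega
    · have : b = 9 := by omega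
      subst this
      have := hsf 3 (by norm_num)
      simp [Nat.isUnit_iff] at this
    · omega
    · have : b = 1 := by nlinarith
      subst this
      norm_num
  · norm_num at hab ⊢
    have ha2 : a ≤ 2 := by nlinarith [Nat.one_le_iff_ne_zero.mpr hb0]
    interval_cases a
    · omega
    · have : b = 8 := by omega
      subst this
      have := hsf 2 (by norm_num)
      simp [Nat.isUnit_iff] at this
    · have : b = 2 := by omega
      subst this
      norm_num
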